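/- arXiv:2107.00399 — 2 statements merged into one kernel-verified Lean document; each statement's English description precedes it below -/
import Mathlib

section
/- The MN array P', defined on rows indexed by t-subsets T of [K] and columns by k ∈ [K] via p'_{T,k} = φ(T ∪ {k}) if k ∉ T and p'_{T,k} = * otherwise, where φ is a bijection from (t+1)-subsets of [K] to [C(K,t+1)], is a (t+1)-regular (K, C(K,t), C(K−1,t−1), C(K,t+1)) PDA. -/
/-- The MN array `P'` with rows indexed by `t`-subsets `T` of `[K]` and
columns by `k ∈ [K]`, defined by `p'_{T,k} = φ(T ∪ {k})` if `k ∉ T` and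
`p'_{T,k} = *` otherwise (where `φ` is a bijection from the `(t+1)`-subsets
of `[K]` onto `[C(K,t+1)]`), is a `(t+1)`-regular
`(K, C(K,t), C(K−1,t−1), C(K,t+1))` PDA:  it has `C(K,t)` rows, `C(K-1,t-1)`
stars per column, each integer appears exactly `t+1` times, and equal
integer entries lie in distinct rows and columns with stars at the opposite
corners of the `2×2` subarray they span. -/
theorem MN_array_is_regular_PDA (K t : ℕ) (ht : 1 ≤ t) (htK : t ≤ K)
    (φ : {A : Finset (Fin K) // A.card = t + 1} ≃ Fin (K.choose (t + 1)))
    (P : {T : Finset (Fin K) // T.card = t} → Fin K → Option (Fin (K.choose (t + 1))))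
    (hP : ∀ (T : {T : Finset (Fin K) // T.card = t}) (k : Fin K),
      P T k = if h : k ∈ T.val then none
        else some (φ ⟨insert k T.val, by
          rw [Finset.card_insert_of_notMem h, T.2]⟩)) :
    -- there are C(K,t) rows
    Fintype.card {T : Finset (Fin K) // T.card = t} = K.choose t ∧
    -- C1: each column contains exactly C(K−1,t−1) stars
    (∀ k : Fin K,
      (Finset.univ.filter fun T : {T : Finset (Fin K) // T.card = t} =>
        P T k = none).card = (K - 1).choose (t - 1)) ∧
    -- C2': each integer appears exactly t+1 times
    (∀ s : Fin (K.choose (t + 1)),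
      (Finset.univ.filter
        fun Tk : {T : Finset (Fin K) // T.card = t} × Fin K =>
          P Tk.1 Tk.2 = some s).card = t + 1) ∧
    -- C3
    (∀ T₁ k₁ T₂ k₂ (s : Fin (K.choose (t + 1))),
      P T₁ k₁ = some s → P T₂ k₂ = some s → (T₁, k₁) ≠ (T₂, k₂) →
      T₁ ≠ T₂ ∧ k₁ ≠ k₂ ∧ P T₁ k₂ = none ∧ P T₂ k₁ = none) := by

  classical
  have hPnone : ∀ T k, P T k = none ↔ k ∈ T.val := by
    intro T k
    rw [hP]
    by_cases h : k ∈ T.val <;> simp [h]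
  have hPsome : ∀ T k (s : Fin (K.choose (t+1))), P T k = some s ↔
      (k ∉ T.val ∧ insert k T.val = (φ.symm s).val) := by
    intro T k s
    rw [hP]
    by_cases h : k ∈ T.val
    · simp [h]
    · simp only [h, dif_neg, not_false_iff, Option.some.injEq, true_and]
      constructor
      · intro he
        have : (⟨insert k T.val, by rw [Finset.card_insert_of_notMem h, T.2]⟩ :
            {A : Finset (Fin K) // A.card = t + 1}) = φ.symm s := by
          rw [← he, Equiv.symm_apply_apply]
        exact congrArg Subtype.val this
      · intro he
        have : (⟨insert k T.val, by rw [Finset.card_insert_of_notMem h, T.2]⟩ :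
            {A : Finset (Fin K) // A.card = t + 1}) = φ.symm s := Subtype.ext he
        rw [this, Equiv.apply_symm_apply]
  refine ⟨?_, ?_, ?_, ?_⟩
  · simp [Fintype.card_finset_len (α := Fin K) t]
  · intro k
    rw [show (K-1).choose (t-1) = ((Finset.univ.erase k).powersetCard (t-1)).card by
      rw [Finset.card_powersetCard, Finset.card_erase_of_mem (Finset.mem_univ k),
        Finset.card_univ, Fintype.card_fin]]
    apply Finset.card_bij (fun T _ => T.val.erase k)
    · intro T hT
      simp only [Finset.mem_filter, Finset.mem_univ, true_and, hPnone] at hT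
      simp only [Finset.mem_powersetCard]
      refine ⟨fun x hx => ?_, ?_⟩
      · simp only [Finset.mem_erase] at hx ⊢
        exact ⟨hx.1, Finset.mem_univ _⟩
      · rw [Finset.card_erase_of_mem hT, T.2]
    · intro T₁ h₁ T₂ h₂ he
      simp only [Finset.mem_filter, Finset.mem_univ, true_and, hPnone] at h₁ h₂
      apply Subtype.ext
      rw [← Finset.insert_erase h₁, ← Finset.insert_erase h₂, he]
    · intro S hS
      simp only [Finset.mem_powersetCard] at hS
      have hk : k ∉ S := fun h => (Finset.mem_erase.mp (hS.1 h)).1 rfl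
      have hcard : (insert k S).card = t := by
        rw [Finset.card_insert_of_notMem hk, hS.2]
        omega
      refine ⟨⟨insert k S, hcard⟩, ?_, ?_⟩
      · simp only [Finset.mem_filter, Finset.mem_univ, true_and, hPnone]
        exact Finset.mem_insert_self k S
      · simp [Finset.erase_insert hk]
  · intro s
    have key : (Finset.univ.filter
        fun Tk : {T : Finset (Fin K) // T.card = t} × Fin K =>
          P Tk.1 Tk.2 = some s).card = (φ.symm s).val.card := by
      apply Finset.card_bij (fun Tk _ => Tk.2)
      · intro Tk hTk
        simp only [Finset.mem_filter, Finset.mem_univ, true_and, hPsome] at hTk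
        rw [← hTk.2]
        exact Finset.mem_insert_self _ _
      · rintro ⟨T₁, k₁⟩ h₁ ⟨T₂, k₂⟩ h₂ he
        simp only at he
        subst he
        simp only [Finset.mem_filter, Finset.mem_univ, true_and, hPsome] at h₁ h₂
        have : T₁.val = T₂.val := by
          rw [← Finset.erase_insert h₁.1, ← Finset.erase_insert h₂.1, h₁.2, h₂.2]
        simp [Subtype.ext this]
      · intro k hk
        have hcard : ((φ.symm s).val.erase k).card = t := by
          rw [Finset.card_erase_of_mem hk, (φ.symm s).2]
          omega
        refine ⟨(⟨(φ.symm s).val.erase k, hcard⟩, k), ?_, rfl⟩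
        simp only [Finset.mem_filter, Finset.mem_univ, true_and, hPsome]
        exact ⟨Finset.notMem_erase _ _, Finset.insert_erase hk⟩
    rw [key, (φ.symm s).2]
  · intro T₁ k₁ T₂ k₂ s h₁ h₂ hne
    rw [hPsome] at h₁ h₂
    obtain ⟨hn₁, he₁⟩ := h₁
    obtain ⟨hn₂, he₂⟩ := h₂
    have hkne : k₁ ≠ k₂ := by
      rintro rfl
      apply hne
      have : T₁.val = T₂.val := by
        rw [← Finset.erase_insert hn₁, ← Finset.erase_insert hn₂, he₁, he₂]
      rw [Subtype.ext this]
    have hk₂T₁ : k₂ ∈ T₁.val := by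
      have : k₂ ∈ insert k₁ T₁.val := by rw [he₁, ← he₂]; exact Finset.mem_insert_self _ _
      rcases Finset.mem_insert.mp this with h | h
      · exact absurd h.symm hkne
      · exact h
    have hk₁T₂ : k₁ ∈ T₂.val := by
      have : k₁ ∈ insert k₂ T₂.val := by rw [he₂, ← he₁]; exact Finset.mem_insert_self _ _
      rcases Finset.mem_insert.mp this with h | h
      · exact absurd h hkne
      · exact h
    refine ⟨?_, hkne, (hPnone _ _).mpr hk₂T₁, (hPnone _ _).mpr hk₁T₂⟩
    intro hT
    rw [hT] at hk₂T₁
    exact hn₂ hk₂T₁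
end

section
/- Let G be an F×F Cauchy matrix over a finite field F, 0 < Z < F, and define shares S = G·[W; V] where W ∈ F^{F−Z} is the secret and V ∈ F^{Z} is uniform and independent of W. Then for any subset I ⊆ [F] with |I| = Z, the shares (S_i)_{i∈I} are independent of W (i.e., any Z shares reveal no information about the secret). -/
open Polynomial in
lemma cauchy_mulVec_injective {𝔽 : Type*} [Field 𝔽] {n : ℕ}
    (a b : Fin n → 𝔽) (ha : Function.Injective a) (hb : Function.Injective b)
    (hab : ∀ i j, a i ≠ b j) (A : Matrix (Fin n) (Fin n) 𝔽)
    (hA : ∀ i j, A i j = (a i - b j)⁻¹) :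
    Function.Injective A.mulVec := by
  classical
  suffices h : ∀ v, A.mulVec v = 0 → v = 0 by
    intro u u' huu
    have : A.mulVec (u - u') = 0 := by
      rw [Matrix.mulVec_sub, huu, sub_self]
    have := h _ this
    funext i; have := congrFun this i
    simpa [sub_eq_zero] using this
  intro v hv
  rcases Nat.eq_zero_or_pos n with rfl | hn
  · funext j; exact j.elim0
  have hne : ∀ i j, a i - b j ≠ 0 := fun i j => sub_ne_zero.2 (hab i j)
  set P : 𝔽[X] := ∑ k, C (v k) * ∏ l ∈ Finset.univ.erase k, (X - C (b l)) with hP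
  have heval : ∀ i, P.eval (a i) = 0 := by
    intro i
    have h0 : A.mulVec v i = 0 := congrFun hv i
    simp only [Matrix.mulVec, dotProduct] at h0
    have h1 : (∏ l, (a i - b l)) * ∑ j, A i j * v j = 0 := by rw [h0, mul_zero]
    rw [Finset.mul_sum] at h1
    rw [hP]
    simp only [eval_finset_sum, eval_mul, eval_C, eval_prod, eval_sub, eval_X]
    rw [← h1]
    apply Finset.sum_congr rfl
    intro k _
    rw [hA, ← Finset.mul_prod_erase _ _ (Finset.mem_univ k)]
    rw [mul_comm (a i - b k), mul_assoc, mul_inv_cancel_left₀ (hne i k)]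
    ring
  have hdeg : P.natDegree < n := by
    rw [hP]
    apply Nat.lt_of_le_of_lt (Polynomial.natDegree_sum_le_of_forall_le _ _ ?_) (show n-1 < n by omega)
    intro k _
    apply le_trans (Polynomial.natDegree_mul_le)
    simp only [Polynomial.natDegree_C, zero_add]
    apply le_trans (Polynomial.natDegree_prod_le _ _)
    apply le_trans (Finset.sum_le_card_nsmul _ _ 1 ?_)
    · simp [Finset.card_erase_of_mem]
    · intro l _; exact Polynomial.natDegree_X_sub_C_le _
  have hP0 : P = 0 :=
    eq_zero_of_natDegree_lt_card_of_eval_eq_zero P ha heval (by simpa using hdeg)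
  funext j
  have := congrArg (Polynomial.eval (b j)) hP0
  rw [hP] at this
  simp only [eval_finset_sum, eval_mul, eval_C, eval_prod, eval_sub, eval_X, eval_zero] at this
  rw [Finset.sum_eq_single j] at this
  · have hprod : (∏ l ∈ Finset.univ.erase j, (b j - b l)) ≠ 0 := by
      apply Finset.prod_ne_zero_iff.2
      intro l hl
      exact sub_ne_zero.2 fun h => (Finset.mem_erase.1 hl).1 (hb h).symm
    simpa [hprod] using this
  · intro k _ hk
    rw [Finset.prod_eq_zero (Finset.mem_erase.2 ⟨hk.symm, Finset.mem_univ j⟩) (by ring), mul_zero]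
  · simp



/-- Secrecy of the `(Z,F)` non-perfect secret sharing scheme: let `G` be an
`F × F` Cauchy matrix over a finite field `𝔽`, let the secret `W` have an
arbitrary distribution `μW` on `𝔽^{F−Z}`, and let the key `V` be uniform on
`𝔽^Z` and independent of `W`; the shares are `S = G·[W;V]`.  Then for any
subset of `Z` share indices (given by an injection `I : Fin Z → Fin F`), the
selected shares are uniformly distributed and independent of `W`: the joint
distribution of `(W, (S_i)_{i ∈ I})` is the product of `μW` with the uniform
distribution on `𝔽^Z`. -/
theorem secret_sharing_Z_shares_independent
    (𝔽 : Type*) [Field 𝔽] [Fintype 𝔽] [DecidableEq 𝔽]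
    (F Z : ℕ) (hZ : 0 < Z) (hZF : Z < F)
    (x y : Fin F → 𝔽)
    (hx : Function.Injective x) (hy : Function.Injective y)
    (hxy : ∀ i j, x i ≠ y j)
    (G : Matrix (Fin F) (Fin F) 𝔽)
    (hG : ∀ i j, G i j = (x i - y j)⁻¹)
    (concat : (Fin (F - Z) → 𝔽) → (Fin Z → 𝔽) → Fin F → 𝔽)
    (hconcat : ∀ w v (j : Fin F), concat w v j =
      if h : j.val < F - Z then w ⟨j.val, h⟩ else v ⟨j.val - (F - Z), by omega⟩)
    (I : Fin Z → Fin F) (hI : Function.Injective I)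
    (μW : PMF (Fin (F - Z) → 𝔽)) :
    ∀ (w : Fin (F - Z) → 𝔽) (s : Fin Z → 𝔽),
      ((μW.bind fun w' => (PMF.uniformOfFintype (Fin Z → 𝔽)).map
          fun v => (w', v)).map
        fun p => (p.1, fun i : Fin Z => G.mulVec (concat p.1 p.2) (I i))) (w, s)
      = μW w * PMF.uniformOfFintype (Fin Z → 𝔽) s := by
  intro w s
  -- the Z×Z submatrix
  set e : Fin Z → Fin F := fun k => ⟨F - Z + k.val, by omega⟩ with he
  have he_inj : Function.Injective e := by
    intro i j h
    have := congrArg Fin.val h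
    simp only [he] at this
    exact Fin.ext (by omega)
  set A : Matrix (Fin Z) (Fin Z) 𝔽 := fun i k => G (I i) (e k) with hA
  have hAinj : Function.Injective A.mulVec := by
    apply cauchy_mulVec_injective (x ∘ I) (y ∘ e) (hx.comp hI) (hy.comp he_inj)
      (fun i j => hxy _ _)
    intro i j
    exact hG _ _
  -- decomposition of the share map
  have hdec : ∀ (w' : Fin (F - Z) → 𝔽) (v : Fin Z → 𝔽),
      (fun i : Fin Z => G.mulVec (concat w' v) (I i))
        = A.mulVec v + fun i => ∑ j : Fin (F - Z), G (I i) ⟨j.val, by omega⟩ * w' j := by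
    intro w' v
    funext i
    have hF : F - Z + Z = F := by omega
    simp only [Matrix.mulVec, dotProduct, Pi.add_apply]
    rw [← Equiv.sum_comp ((finSumFinEquiv.trans (finCongr hF)))
      (fun j => G (I i) j * concat w' v j), Fintype.sum_sum_type]
    have h1 : ∀ k : Fin (F - Z),
        G (I i) ((finSumFinEquiv.trans (finCongr hF)) (Sum.inl k)) *
          concat w' v ((finSumFinEquiv.trans (finCongr hF)) (Sum.inl k))
        = G (I i) ⟨k.val, by omega⟩ * w' k := by
      intro k
      have hval : (((finSumFinEquiv.trans (finCongr hF)) (Sum.inl k)) : Fin F).val = k.val := by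
        simp
      have hfin : ((finSumFinEquiv.trans (finCongr hF)) (Sum.inl k)) = ⟨k.val, by omega⟩ :=
        Fin.ext hval
      rw [hfin, hconcat]
      simp
    have h2 : ∀ k : Fin Z,
        G (I i) ((finSumFinEquiv.trans (finCongr hF)) (Sum.inr k)) *
          concat w' v ((finSumFinEquiv.trans (finCongr hF)) (Sum.inr k))
        = A i k * v k := by
      intro k
      have hfin : ((finSumFinEquiv.trans (finCongr hF)) (Sum.inr k)) = e k :=
        Fin.ext (by simp [he])
      rw [hfin, hconcat, hA]
      have : ¬ ((e k : Fin F).val < F - Z) := by simp [he]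
      rw [dif_neg this]
      congr 1
      congr 1
      exact Fin.ext (by simp [he])
    rw [Finset.sum_congr rfl (fun k _ => h1 k), Finset.sum_congr rfl (fun k _ => h2 k)]
    ring
  -- bijectivity of v ↦ shares for fixed w'
  have hbij : ∀ w' : Fin (F - Z) → 𝔽,
      Function.Bijective (fun v : Fin Z → 𝔽 => fun i : Fin Z => G.mulVec (concat w' v) (I i)) := by
    intro w'
    have : (fun v : Fin Z → 𝔽 => fun i : Fin Z => G.mulVec (concat w' v) (I i))
        = (fun u => u + fun i => ∑ j : Fin (F - Z), G (I i) ⟨j.val, by omega⟩ * w' j)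
          ∘ A.mulVec := by
      funext v; exact hdec w' v
    rw [this]
    exact (Finite.injective_iff_bijective.1
      ((add_left_injective _).comp hAinj))
  -- PMF computation
  rw [PMF.map_bind]
  simp only [PMF.map_comp]
  rw [PMF.bind_apply]
  rw [tsum_eq_single w ?_]
  · obtain ⟨v0, hv0⟩ := (hbij w).2 s
    rw [PMF.map_apply]
    rw [tsum_eq_single v0 ?_]
    · simp only [Function.comp_apply]
      rw [if_pos (by rw [Prod.mk.injEq]; exact ⟨rfl, hv0.symm⟩)]
      simp [PMF.uniformOfFintype_apply]
    · intro v hv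
      rw [if_neg]
      simp only [Function.comp_apply, Prod.mk.injEq, not_and]
      intro _ hs
      exact hv ((hbij w).1 (hv0.trans hs).symm)
  · intro w' hw'
    rw [PMF.map_apply]
    convert mul_zero _
    apply ENNReal.tsum_eq_zero.2
    intro v
    rw [if_neg]
    simp only [Function.comp_apply, Prod.mk.injEq, not_and]
    intro h
    exact absurd h.symm hw'
end
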